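/- Let $p$ be a prime, $s \ge 1$, and for $r \in p^{\mathbb{Q}_{\ge 0}}$ let $\|\sum_{\vec{i}} a_{\vec{i}} T^{\vec{i}}\|_r = \sup_{\vec{i}} |a_{\vec{i}}|_p r^{|\vec{i}|}$ be the Gauss norm on $\mathbb{Z}_p[T_1,\dots,T_s]$, where $|(i_1,\dots,i_s)| = i_1 + \cdots + i_s$. Suppose $\varsigma^*: \mathbb{Z}_p[T_1,\dots,T_s] \to \mathbb{Z}_p\langle T_1,\dots,T_s\rangle_{r_1}$ is a ring homomorphism (for some $r_1 > 1$) with $\|\varsigma^*(T_j) - T_j^p\|_r < 1$ for all $j$ and all $r \in [1, r_2] \cap p^{\mathbb{Q}}$ for some $r_2 > 1$. Then for every $H \in \mathbb{Z}_p[T_1,\dots,T_s]$ and every $r \in (1, r_2] \cap p^{\mathbb{Q}}$ one has $\|\varsigma^*(H) - H(T_1^p, \dots, T_s^p)\|_r \le r^{-p}\|H\|_{r^p}$, and consequently $\|\varsigma^*(H)\|_r = \|H\|_{r^p}$. -/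

import Mathlib

/-- The Gauss norm `‖·‖_r` (with values in `ℝ≥0∞`) on power series over `ℤ_p`:
`‖∑ a_i T^i‖_r = sup_i |a_i|_p r^{|i|}`.  On polynomials it restricts to the Gauss
norm of the statement. -/
noncomputable def gaussNorm (p : ℕ) [Fact p.Prime] (s : ℕ) (r : ℝ)
    (f : MvPowerSeries (Fin s) ℤ_[p]) : ENNReal :=
  ⨆ i : Fin s →₀ ℕ,
    ENNReal.ofReal (‖MvPowerSeries.coeff i f‖ * r ^ (i.sum fun _ n => n))

namespace FrobAux

open MvPowerSeries ENNReal

variable {p : ℕ} [hp : Fact p.Prime] {s : ℕ}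

lemma gauss_le {r : ℝ} {c : ENNReal} {f : MvPowerSeries (Fin s) ℤ_[p]}
    (h : ∀ i : Fin s →₀ ℕ,
      ENNReal.ofReal (‖MvPowerSeries.coeff (R := ℤ_[p]) i f‖ * r ^ (i.sum fun _ n => n)) ≤ c) :
    gaussNorm p s r f ≤ c := iSup_le h

lemma coeff_le_gauss (r : ℝ) (f : MvPowerSeries (Fin s) ℤ_[p]) (i : Fin s →₀ ℕ) :
    ENNReal.ofReal (‖MvPowerSeries.coeff (R := ℤ_[p]) i f‖ * r ^ (i.sum fun _ n => n)) ≤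
      gaussNorm p s r f :=
  le_iSup (fun i => ENNReal.ofReal (‖MvPowerSeries.coeff (R := ℤ_[p]) i f‖ * r ^ (i.sum fun _ n => n))) i

lemma gauss_zero (r : ℝ) : gaussNorm p s r (0 : MvPowerSeries (Fin s) ℤ_[p]) = 0 := by
  simp [_root_.gaussNorm]

lemma gauss_neg (r : ℝ) (f : MvPowerSeries (Fin s) ℤ_[p]) :
    gaussNorm p s r (-f) = gaussNorm p s r f := by
  simp [_root_.gaussNorm]

lemma gauss_add_le (r : ℝ) (hr : 0 ≤ r) (f g : MvPowerSeries (Fin s) ℤ_[p]) :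
    gaussNorm p s r (f + g) ≤ max (gaussNorm p s r f) (gaussNorm p s r g) := by
  refine gauss_le fun i => ?_
  have hco : (MvPowerSeries.coeff (R := ℤ_[p]) i) (f + g)
      = MvPowerSeries.coeff (R := ℤ_[p]) i f + MvPowerSeries.coeff (R := ℤ_[p]) i g := map_add _ _ _
  have hpow : (0:ℝ) ≤ r ^ (i.sum fun _ n => n) := pow_nonneg hr _
  rcases max_cases ‖MvPowerSeries.coeff (R := ℤ_[p]) i f‖ ‖MvPowerSeries.coeff (R := ℤ_[p]) i g‖ with
    ⟨hmax, _⟩ | ⟨hmax, _⟩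
  · refine le_max_of_le_left ?_
    refine le_trans (ENNReal.ofReal_le_ofReal ?_) (coeff_le_gauss r f i)
    rw [hco]
    exact mul_le_mul_of_nonneg_right ((PadicInt.nonarchimedean _ _).trans hmax.le) hpow
  · refine le_max_of_le_right ?_
    refine le_trans (ENNReal.ofReal_le_ofReal ?_) (coeff_le_gauss r g i)
    rw [hco]
    exact mul_le_mul_of_nonneg_right ((PadicInt.nonarchimedean _ _).trans hmax.le) hpow

lemma gauss_sum_le {r : ℝ} (hr : 0 ≤ r) {ι : Type*} {t : Finset ι}
    {F : ι → MvPowerSeries (Fin s) ℤ_[p]} {c : ENNReal}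
    (h : ∀ x ∈ t, gaussNorm p s r (F x) ≤ c) :
    gaussNorm p s r (∑ x ∈ t, F x) ≤ c := by
  classical
  induction t using Finset.induction_on with
  | empty => simpa [gauss_zero] using (zero_le c)
  | insert _ _ hx ih =>
    rename_i a t'
    rw [Finset.sum_insert hx]
    refine (gauss_add_le r hr _ _).trans (max_le (h a (Finset.mem_insert_self _ _))
      (ih fun x hxt => h x (Finset.mem_insert_of_mem hxt)))

lemma wt_add (i j : Fin s →₀ ℕ) :
    ((i + j).sum fun _ n => n) = (i.sum fun _ n => n) + (j.sum fun _ n => n) :=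
  Finsupp.sum_add_index' (fun _ => rfl) (fun _ _ _ => rfl)

lemma wt_eq (i : Fin s →₀ ℕ) : (i.sum fun _ n => n) = ∑ j : Fin s, i j :=
  Finsupp.sum_fintype _ _ (fun _ => rfl)

lemma wt_smul (c : ℕ) (i : Fin s →₀ ℕ) :
    ((c • i).sum fun _ n => n) = c * (i.sum fun _ n => n) := by
  simp [wt_eq, Finsupp.smul_apply, Finset.mul_sum]

lemma gauss_mul_le (r : ℝ) (hr : 0 ≤ r) (f g : MvPowerSeries (Fin s) ℤ_[p]) :
    gaussNorm p s r (f * g) ≤ gaussNorm p s r f * gaussNorm p s r g := by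
  classical
  refine gauss_le fun i => ?_
  rw [MvPowerSeries.coeff_mul]
  have hne : (Finset.HasAntidiagonal.antidiagonal i).Nonempty :=
    ⟨(0, i), by rw [Finset.HasAntidiagonal.mem_antidiagonal]; exact zero_add i⟩
  obtain ⟨x, hxmem, hx⟩ := IsUltrametricDist.exists_norm_finset_sum_le_of_nonempty hne
    (fun x => MvPowerSeries.coeff (R := ℤ_[p]) x.1 f * MvPowerSeries.coeff (R := ℤ_[p]) x.2 g)
  have hsum : x.1 + x.2 = i := Finset.HasAntidiagonal.mem_antidiagonal.1 hxmem
  have hpow : r ^ (i.sum fun _ n => n)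
      = r ^ (x.1.sum fun _ n => n) * r ^ (x.2.sum fun _ n => n) := by
    rw [← pow_add, ← wt_add, hsum]
  calc
    ENNReal.ofReal (‖∑ x ∈ Finset.HasAntidiagonal.antidiagonal i,
        MvPowerSeries.coeff (R := ℤ_[p]) x.1 f * MvPowerSeries.coeff (R := ℤ_[p]) x.2 g‖
          * r ^ (i.sum fun _ n => n))
        ≤ ENNReal.ofReal ((‖MvPowerSeries.coeff (R := ℤ_[p]) x.1 f‖ * r ^ (x.1.sum fun _ n => n)) *
            (‖MvPowerSeries.coeff (R := ℤ_[p]) x.2 g‖ * r ^ (x.2.sum fun _ n => n))) := by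
          refine ENNReal.ofReal_le_ofReal ?_
          rw [hpow]
          calc ‖∑ x ∈ Finset.HasAntidiagonal.antidiagonal i,
              MvPowerSeries.coeff (R := ℤ_[p]) x.1 f * MvPowerSeries.coeff (R := ℤ_[p]) x.2 g‖
              * (r ^ (x.1.sum fun _ n => n) * r ^ (x.2.sum fun _ n => n))
              ≤ (‖MvPowerSeries.coeff (R := ℤ_[p]) x.1 f‖ * ‖MvPowerSeries.coeff (R := ℤ_[p]) x.2 g‖)
                * (r ^ (x.1.sum fun _ n => n) * r ^ (x.2.sum fun _ n => n)) := by
                  refine mul_le_mul_of_nonneg_right ?_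
                    (mul_nonneg (pow_nonneg hr _) (pow_nonneg hr _))
                  rw [← norm_mul]; exact hx
            _ = (‖MvPowerSeries.coeff (R := ℤ_[p]) x.1 f‖ * r ^ (x.1.sum fun _ n => n)) *
                (‖MvPowerSeries.coeff (R := ℤ_[p]) x.2 g‖ * r ^ (x.2.sum fun _ n => n)) := by ring
    _ ≤ gaussNorm p s r f * gaussNorm p s r g := by
          rw [ENNReal.ofReal_mul (mul_nonneg (norm_nonneg _) (pow_nonneg hr _))]
          exact mul_le_mul' (coeff_le_gauss r f x.1) (coeff_le_gauss r g x.2)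

lemma gauss_monomial_le (r : ℝ) (m : Fin s →₀ ℕ) (a : ℤ_[p]) :
    gaussNorm p s r (MvPowerSeries.monomial (R := ℤ_[p]) m a) ≤
      ENNReal.ofReal (‖a‖ * r ^ (m.sum fun _ n => n)) := by
  classical
  refine gauss_le fun i => ?_
  rw [MvPowerSeries.coeff_monomial]
  by_cases h : i = m
  · subst h; simp
  · simp [h]

lemma gauss_one_le (r : ℝ) : gaussNorm p s r (1 : MvPowerSeries (Fin s) ℤ_[p]) ≤ 1 := by
  have := gauss_monomial_le (p := p) (s := s) r 0 1
  rw [MvPowerSeries.monomial_zero_one] at this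
  simpa using this

lemma gauss_pow_le {r : ℝ} (hr : 0 ≤ r) {f : MvPowerSeries (Fin s) ℤ_[p]} {c : ENNReal}
    (h : gaussNorm p s r f ≤ c) : ∀ n : ℕ, gaussNorm p s r (f ^ n) ≤ c ^ n := by
  intro n
  induction n with
  | zero => simpa using gauss_one_le (p := p) (s := s) r
  | succ n ih =>
    rw [pow_succ, pow_succ]
    exact (gauss_mul_le r hr _ _).trans (mul_le_mul' ih h)

lemma prod_X_pow (t : Finset (Fin s)) (n : Fin s → ℕ) :
    (∏ j ∈ t, (MvPowerSeries.X j : MvPowerSeries (Fin s) ℤ_[p]) ^ (n j))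
      = MvPowerSeries.monomial (R := ℤ_[p]) (∑ j ∈ t, Finsupp.single j (n j)) 1 := by
  classical
  induction t using Finset.induction_on with
  | empty => simp [MvPowerSeries.monomial_zero_one]
  | insert _ _ hx ih =>
    rename_i a t'
    rw [Finset.prod_insert hx, Finset.sum_insert hx, ih, MvPowerSeries.X_pow_eq,
      MvPowerSeries.monomial_mul_monomial, one_mul]

lemma sum_single_smul (c : ℕ) (d : Fin s →₀ ℕ) :
    (∑ j ∈ d.support, Finsupp.single j (c * d j)) = c • d := by
  have h1 : c • d = c • (d.sum Finsupp.single) := by rw [Finsupp.sum_single]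
  rw [h1, Finsupp.smul_sum]
  simp only [Finsupp.smul_single, smul_eq_mul]
  rfl

lemma aeval_c_monomial (c : ℕ) (i : Fin s →₀ ℕ) (a : ℤ_[p]) :
    MvPolynomial.aeval (fun j => (MvPowerSeries.X j : MvPowerSeries (Fin s) ℤ_[p]) ^ c)
        (MvPolynomial.monomial i a)
      = MvPowerSeries.monomial (R := ℤ_[p]) (c • i) a := by
  classical
  rw [MvPolynomial.aeval_monomial]
  have hprod : (i.prod fun j e =>
      ((MvPowerSeries.X j : MvPowerSeries (Fin s) ℤ_[p]) ^ c) ^ e)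
      = MvPowerSeries.monomial (R := ℤ_[p]) (c • i) 1 := by
    rw [Finsupp.prod]
    have : ∀ j ∈ i.support, ((MvPowerSeries.X j : MvPowerSeries (Fin s) ℤ_[p]) ^ c) ^ (i j)
        = (MvPowerSeries.X j : MvPowerSeries (Fin s) ℤ_[p]) ^ (c * i j) := by
      intro j _; rw [← pow_mul]
    rw [Finset.prod_congr rfl this, prod_X_pow, sum_single_smul]
  rw [hprod, ← MvPowerSeries.c_eq_algebraMap]
  have : (MvPowerSeries.C (σ := Fin s) (R := ℤ_[p])) a = MvPowerSeries.monomial (R := ℤ_[p]) 0 a := rfl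
  rw [this, MvPowerSeries.monomial_mul_monomial, zero_add, mul_one]

lemma aeval_c_eq (c : ℕ) (H : MvPolynomial (Fin s) ℤ_[p]) :
    MvPolynomial.aeval (fun j => (MvPowerSeries.X j : MvPowerSeries (Fin s) ℤ_[p]) ^ c) H
      = ∑ i ∈ H.support, MvPowerSeries.monomial (R := ℤ_[p]) (c • i) (MvPolynomial.coeff i H) := by
  conv_lhs => rw [H.as_sum]
  rw [map_sum]
  exact Finset.sum_congr rfl fun i _ => aeval_c_monomial c i _

lemma smul_finsupp_injective {c : ℕ} (hc : c ≠ 0) {i j : Fin s →₀ ℕ} (h : c • i = c • j) :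
    i = j := by
  ext k
  have := DFunLike.congr_fun h k
  simp only [Finsupp.smul_apply, smul_eq_mul] at this
  exact Nat.eq_of_mul_eq_mul_left (Nat.pos_of_ne_zero hc) this

lemma coeff_aeval_smul {c : ℕ} (hc : c ≠ 0) (H : MvPolynomial (Fin s) ℤ_[p]) (i : Fin s →₀ ℕ) :
    MvPowerSeries.coeff (R := ℤ_[p]) (c • i)
        (MvPolynomial.aeval (fun j => (MvPowerSeries.X j : MvPowerSeries (Fin s) ℤ_[p]) ^ c) H)
      = MvPolynomial.coeff i H := by
  classical
  rw [aeval_c_eq, map_sum]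
  have : ∀ j ∈ H.support, MvPowerSeries.coeff (R := ℤ_[p]) (c • i)
      (MvPowerSeries.monomial (R := ℤ_[p]) (c • j) (MvPolynomial.coeff j H))
      = if i = j then MvPolynomial.coeff j H else 0 := by
    intro j _
    rw [MvPowerSeries.coeff_monomial]
    congr 1
    simp only [eq_iff_iff]
    constructor
    · exact fun h => smul_finsupp_injective hc h
    · rintro rfl; rfl
  rw [Finset.sum_congr rfl this, Finset.sum_ite_eq]
  by_cases h : i ∈ H.support
  · simp [h]
  · simp [h, MvPolynomial.notMem_support_iff.1 h]

lemma coeff_aeval_zero {c : ℕ} (H : MvPolynomial (Fin s) ℤ_[p]) {m : Fin s →₀ ℕ}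
    (h : ∀ i : Fin s →₀ ℕ, m ≠ c • i) :
    MvPowerSeries.coeff (R := ℤ_[p]) m
        (MvPolynomial.aeval (fun j => (MvPowerSeries.X j : MvPowerSeries (Fin s) ℤ_[p]) ^ c) H)
      = 0 := by
  classical
  rw [aeval_c_eq, map_sum]
  refine Finset.sum_eq_zero fun i _ => ?_
  rw [MvPowerSeries.coeff_monomial, if_neg (h i)]

lemma coeff_aeval_one (H : MvPolynomial (Fin s) ℤ_[p]) (m : Fin s →₀ ℕ) :
    MvPowerSeries.coeff (R := ℤ_[p]) m
        (MvPolynomial.aeval (fun j => (MvPowerSeries.X j : MvPowerSeries (Fin s) ℤ_[p])) H)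
      = MvPolynomial.coeff m H := by
  have h1 : (fun j => (MvPowerSeries.X j : MvPowerSeries (Fin s) ℤ_[p]))
      = fun j => (MvPowerSeries.X j : MvPowerSeries (Fin s) ℤ_[p]) ^ 1 := by
    funext j; rw [pow_one]
  rw [h1]
  have := coeff_aeval_smul (c := 1) one_ne_zero H m
  rwa [one_smul] at this

lemma gauss_aeval_pow {c : ℕ} (hc : c ≠ 0) {r : ℝ}
    (H : MvPolynomial (Fin s) ℤ_[p]) :
    gaussNorm p s r
        (MvPolynomial.aeval (fun j => (MvPowerSeries.X j : MvPowerSeries (Fin s) ℤ_[p]) ^ c) H)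
      = gaussNorm p s (r ^ c)
        (MvPolynomial.aeval (fun j => (MvPowerSeries.X j : MvPowerSeries (Fin s) ℤ_[p])) H) := by
  classical
  apply le_antisymm
  · refine gauss_le fun m => ?_
    by_cases h : ∃ i : Fin s →₀ ℕ, m = c • i
    · obtain ⟨i, rfl⟩ := h
      rw [coeff_aeval_smul hc, wt_smul, pow_mul, ← coeff_aeval_one H i]
      exact coeff_le_gauss _ _ i
    · push_neg at h
      rw [coeff_aeval_zero H h]
      simp
  · refine gauss_le fun i => ?_
    rw [coeff_aeval_one H i, ← coeff_aeval_smul hc H i]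
    have : (r ^ c) ^ (i.sum fun _ n => n) = r ^ ((c • i).sum fun _ n => n) := by
      rw [wt_smul, pow_mul]
    rw [this]
    exact coeff_le_gauss _ _ (c • i)

lemma gauss_eq_of_lt {r : ℝ} (hr : 0 ≤ r) {f g : MvPowerSeries (Fin s) ℤ_[p]}
    (h : gaussNorm p s r (f - g) < gaussNorm p s r g) :
    gaussNorm p s r f = gaussNorm p s r g := by
  have h1 : gaussNorm p s r f ≤ gaussNorm p s r g := by
    have := gauss_add_le r hr (f - g) g
    rw [sub_add_cancel] at this
    exact this.trans (max_le h.le le_rfl)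
  have h2 : gaussNorm p s r g ≤ max (gaussNorm p s r f) (gaussNorm p s r (f - g)) := by
    have := gauss_add_le r hr f (-(f - g))
    rw [gauss_neg] at this
    simpa using this
  rcases le_max_iff.1 h2 with h3 | h3
  · exact le_antisymm h1 h3
  · exact absurd h3 (not_le.2 h)

lemma ringHom_eq_C (f : ℤ_[p] →+* MvPowerSeries (Fin s) ℤ_[p]) (a : ℤ_[p]) :
    f a = MvPowerSeries.C (σ := Fin s) (R := ℤ_[p]) a := by
  have key : ∀ m : Fin s →₀ ℕ,
      MvPowerSeries.coeff (R := ℤ_[p]) m (f a - MvPowerSeries.C (σ := Fin s) (R := ℤ_[p]) a) = 0 := by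
    intro m
    set x := MvPowerSeries.coeff (R := ℤ_[p]) m (f a - MvPowerSeries.C (σ := Fin s) (R := ℤ_[p]) a) with hx
    have hbound : ∀ k : ℕ, ‖x‖ ≤ ((p : ℝ)⁻¹) ^ k := by
      intro k
      obtain ⟨b, hb⟩ := Ideal.mem_span_singleton'.1 (PadicInt.appr_spec k a)
      have hdecomp : f a - MvPowerSeries.C (σ := Fin s) (R := ℤ_[p]) a
          = (f b - MvPowerSeries.C (σ := Fin s) (R := ℤ_[p]) b) *
              MvPowerSeries.C (σ := Fin s) (R := ℤ_[p]) ((p : ℤ_[p]) ^ k) := by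
        have h1 : a = b * (p : ℤ_[p]) ^ k + ((PadicInt.appr a k : ℕ) : ℤ_[p]) := by
          rw [hb]; ring
        rw [h1, map_add, map_add, map_mul, map_mul, map_natCast f, map_natCast
          (MvPowerSeries.C (σ := Fin s) (R := ℤ_[p])), map_pow, map_pow, map_natCast f,
          map_natCast (MvPowerSeries.C (σ := Fin s) (R := ℤ_[p]))]
        ring
      have hcoeff : x = MvPowerSeries.coeff (R := ℤ_[p]) m
          (f b - MvPowerSeries.C (σ := Fin s) (R := ℤ_[p]) b) * ((p : ℤ_[p]) ^ k) := by
        rw [hx, hdecomp, MvPowerSeries.coeff_mul_C]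
      rw [hcoeff, norm_mul]
      calc ‖MvPowerSeries.coeff (R := ℤ_[p]) m (f b - MvPowerSeries.C (σ := Fin s) (R := ℤ_[p]) b)‖ *
            ‖(p : ℤ_[p]) ^ k‖ ≤ 1 * ‖(p : ℤ_[p]) ^ k‖ :=
          mul_le_mul_of_nonneg_right (PadicInt.norm_le_one _) (norm_nonneg _)
        _ = ((p : ℝ)⁻¹) ^ k := by
            rw [one_mul, PadicInt.norm_p_pow, inv_pow, ← zpow_natCast, ← zpow_neg]
    by_contra hne
    have hpos : 0 < ‖x‖ := norm_pos_iff.2 hne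
    have hplt : (p : ℝ)⁻¹ < 1 := by
      rw [inv_lt_one_iff₀]
      right
      exact_mod_cast hp.1.one_lt
    obtain ⟨k, hk⟩ := exists_pow_lt_of_lt_one hpos hplt
    exact absurd (hbound k) (not_le.2 hk)
  have : f a - MvPowerSeries.C (σ := Fin s) (R := ℤ_[p]) a = 0 := by
    ext m
    rw [key m, map_zero]
  exact sub_eq_zero.1 this

end FrobAux

open FrobAux MvPowerSeries in
/-- **Gauss norm estimate for a Frobenius lift.** -/
theorem frobenius_lift_gauss_norm
    (p : ℕ) [Fact p.Prime] (s : ℕ) (hs : 1 ≤ s)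
    (ς : MvPolynomial (Fin s) ℤ_[p] →+* MvPowerSeries (Fin s) ℤ_[p])
    (hland : ∃ r₁ : ℝ, 1 < r₁ ∧ ∀ H, gaussNorm p s r₁ (ς H) ≠ ⊤)
    (r₂ : ℝ) (hr₂ : 1 < r₂)
    (hgen : ∀ (j : Fin s) (r : ℝ), 1 ≤ r → r ≤ r₂ →
      (∃ q : ℚ, r = (p : ℝ) ^ (q : ℝ)) →
      gaussNorm p s r (ς (MvPolynomial.X j) - (MvPowerSeries.X j) ^ p) < 1) :
    ∀ (H : MvPolynomial (Fin s) ℤ_[p]) (r : ℝ), 1 < r → r ≤ r₂ →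
      (∃ q : ℚ, r = (p : ℝ) ^ (q : ℝ)) →
      gaussNorm p s r
          (ς H - MvPolynomial.aeval
            (fun j => (MvPowerSeries.X j : MvPowerSeries (Fin s) ℤ_[p]) ^ p) H) ≤
          ENNReal.ofReal (r ^ (-(p : ℝ))) *
            gaussNorm p s (r ^ (p : ℕ))
              (MvPolynomial.aeval
                (fun j => (MvPowerSeries.X j : MvPowerSeries (Fin s) ℤ_[p])) H) ∧
        gaussNorm p s r (ς H) =
          gaussNorm p s (r ^ (p : ℕ))
            (MvPolynomial.aeval
              (fun j => (MvPowerSeries.X j : MvPowerSeries (Fin s) ℤ_[p])) H) := by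
  classical
  intro H r hr1 hrr2 hrq
  have hpp : p.Prime := Fact.out
  have hp0 : p ≠ 0 := hpp.ne_zero
  have hr0 : (0:ℝ) < r := lt_trans one_pos hr1
  have hr0' : (0:ℝ) ≤ r := hr0.le
  set dd : ENNReal := ENNReal.ofReal (r ^ (-(p : ℝ))) with hdd
  set cc : ENNReal := ENNReal.ofReal (r ^ (p : ℕ)) with hcc
  have hcpos : (0:ℝ) < r ^ (p:ℕ) := pow_pos hr0 _
  have hc1 : (1:ℝ) ≤ r ^ (p:ℕ) := one_le_pow₀ hr1.le
  have hdnonneg : (0:ℝ) ≤ r ^ (-(p:ℝ)) := Real.rpow_nonneg hr0.le _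
  have hdc : dd * cc = 1 := by
    rw [hdd, hcc, ← ENNReal.ofReal_mul hdnonneg]
    have : r ^ (-(p:ℝ)) * r ^ (p:ℕ) = 1 := by
      rw [← Real.rpow_natCast r p, ← Real.rpow_add hr0]
      norm_num
    rw [this, ENNReal.ofReal_one]
  have hcc1 : (1:ENNReal) ≤ cc := by
    rw [hcc]; exact ENNReal.one_le_ofReal.2 hc1
  -- bound on ς(X j)
  have hXp : ∀ j : Fin s,
      gaussNorm p s r ((MvPowerSeries.X j : MvPowerSeries (Fin s) ℤ_[p]) ^ p) ≤ cc := by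
    intro j
    rw [MvPowerSeries.X_pow_eq]
    refine (gauss_monomial_le r _ _).trans ?_
    have hwt : ((Finsupp.single j p).sum fun _ n => n) = p := Finsupp.sum_single_index rfl
    rw [hwt, hcc]
    simp
  have hdiff : ∀ j : Fin s,
      gaussNorm p s r (ς (MvPolynomial.X j) -
        (MvPowerSeries.X j : MvPowerSeries (Fin s) ℤ_[p]) ^ p) ≤ 1 :=
    fun j => (hgen j r hr1.le hrr2 hrq).le
  have hA : ∀ j : Fin s, gaussNorm p s r (ς (MvPolynomial.X j)) ≤ cc := by
    intro j
    have hsplit : ς (MvPolynomial.X j)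
        = (ς (MvPolynomial.X j) - (MvPowerSeries.X j : MvPowerSeries (Fin s) ℤ_[p]) ^ p)
          + (MvPowerSeries.X j : MvPowerSeries (Fin s) ℤ_[p]) ^ p := by ring
    rw [hsplit]
    exact (gauss_add_le r hr0' _ _).trans (max_le ((hdiff j).trans hcc1) (hXp j))
  -- powers of the difference
  have hdiffpow : ∀ (j : Fin s) (n : ℕ),
      gaussNorm p s r ((ς (MvPolynomial.X j)) ^ n -
        ((MvPowerSeries.X j : MvPowerSeries (Fin s) ℤ_[p]) ^ p) ^ n) ≤ dd * cc ^ n := by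
    intro j n
    induction n with
    | zero => simp [gauss_zero]
    | succ n ih =>
      have hsplit : (ς (MvPolynomial.X j)) ^ (n+1) -
          ((MvPowerSeries.X j : MvPowerSeries (Fin s) ℤ_[p]) ^ p) ^ (n+1)
          = ς (MvPolynomial.X j) * ((ς (MvPolynomial.X j)) ^ n -
              ((MvPowerSeries.X j : MvPowerSeries (Fin s) ℤ_[p]) ^ p) ^ n)
            + (ς (MvPolynomial.X j) -
                (MvPowerSeries.X j : MvPowerSeries (Fin s) ℤ_[p]) ^ p) *
              ((MvPowerSeries.X j : MvPowerSeries (Fin s) ℤ_[p]) ^ p) ^ n := by ring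
      rw [hsplit]
      refine (gauss_add_le r hr0' _ _).trans (max_le ?_ ?_)
      · refine ((gauss_mul_le r hr0' _ _).trans (mul_le_mul' (hA j) ih)).trans ?_
        rw [pow_succ]
        exact le_of_eq (by ring)
      · refine ((gauss_mul_le r hr0' _ _).trans
          (mul_le_mul' (hdiff j) (gauss_pow_le hr0' (hXp j) n))).trans ?_
        rw [one_mul]
        have h1 : dd * cc ^ (n+1) = cc ^ n := by
          rw [pow_succ, mul_comm (cc ^ n) cc, ← mul_assoc, hdc, one_mul]
        rw [h1]
  -- product bounds
  have hprodB : ∀ (t : Finset (Fin s)) (n : Fin s → ℕ),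
      gaussNorm p s r (∏ j ∈ t,
        ((MvPowerSeries.X j : MvPowerSeries (Fin s) ℤ_[p]) ^ p) ^ (n j))
        ≤ cc ^ (∑ j ∈ t, n j) := by
    intro t n
    induction t using Finset.induction_on with
    | empty => simpa using gauss_one_le (p := p) (s := s) r
    | insert _ _ hx ih =>
      rename_i a t'
      rw [Finset.prod_insert hx, Finset.sum_insert hx, pow_add]
      exact (gauss_mul_le r hr0' _ _).trans (mul_le_mul' (gauss_pow_le hr0' (hXp a) _) ih)
  have hprodDiff : ∀ (t : Finset (Fin s)) (n : Fin s → ℕ),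
      gaussNorm p s r ((∏ j ∈ t, (ς (MvPolynomial.X j)) ^ (n j)) -
        ∏ j ∈ t, ((MvPowerSeries.X j : MvPowerSeries (Fin s) ℤ_[p]) ^ p) ^ (n j))
        ≤ dd * cc ^ (∑ j ∈ t, n j) := by
    intro t n
    induction t using Finset.induction_on with
    | empty => simp [gauss_zero]
    | insert _ _ hx ih =>
      rename_i a t'
      have hsplit : (∏ j ∈ insert a t', (ς (MvPolynomial.X j)) ^ (n j)) -
          ∏ j ∈ insert a t', ((MvPowerSeries.X j : MvPowerSeries (Fin s) ℤ_[p]) ^ p) ^ (n j)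
          = (ς (MvPolynomial.X a)) ^ (n a) *
              ((∏ j ∈ t', (ς (MvPolynomial.X j)) ^ (n j)) -
                ∏ j ∈ t', ((MvPowerSeries.X j : MvPowerSeries (Fin s) ℤ_[p]) ^ p) ^ (n j))
            + ((ς (MvPolynomial.X a)) ^ (n a) -
                ((MvPowerSeries.X a : MvPowerSeries (Fin s) ℤ_[p]) ^ p) ^ (n a)) *
              ∏ j ∈ t', ((MvPowerSeries.X j : MvPowerSeries (Fin s) ℤ_[p]) ^ p) ^ (n j) := by
        rw [Finset.prod_insert hx, Finset.prod_insert hx]; ring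
      rw [hsplit, Finset.sum_insert hx]
      refine (gauss_add_le r hr0' _ _).trans (max_le ?_ ?_)
      · refine ((gauss_mul_le r hr0' _ _).trans
          (mul_le_mul' (gauss_pow_le hr0' (hA a) _) ih)).trans ?_
        rw [pow_add]
        exact le_of_eq (by ring)
      · refine ((gauss_mul_le r hr0' _ _).trans
          (mul_le_mul' (hdiffpow a (n a)) (hprodB t' n))).trans ?_
        rw [pow_add]
        exact le_of_eq (by ring)
  -- rigidity
  have hCς : ∀ a : ℤ_[p], ς (MvPolynomial.C a) = MvPowerSeries.C (σ := Fin s) (R := ℤ_[p]) a := by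
    intro a
    exact ringHom_eq_C (ς.comp (MvPolynomial.C : ℤ_[p] →+* MvPolynomial (Fin s) ℤ_[p])) a
  have hCa : ∀ a : ℤ_[p],
      gaussNorm p s r (MvPowerSeries.C (σ := Fin s) (R := ℤ_[p]) a) ≤ ENNReal.ofReal ‖a‖ := by
    intro a
    have : (MvPowerSeries.C (σ := Fin s) (R := ℤ_[p])) a = MvPowerSeries.monomial (R := ℤ_[p]) 0 a := rfl
    rw [this]
    refine (gauss_monomial_le r 0 a).trans ?_
    rw [Finsupp.sum_zero_index, pow_zero, mul_one]
  -- key monomial bound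
  have hmono : ∀ (i : Fin s →₀ ℕ) (a : ℤ_[p]),
      gaussNorm p s r (ς (MvPolynomial.monomial i a) -
          MvPowerSeries.monomial (R := ℤ_[p]) (p • i) a)
        ≤ dd * ENNReal.ofReal (‖a‖ * (r ^ (p:ℕ)) ^ (i.sum fun _ n => n)) := by
    intro i a
    have hP : ς (MvPolynomial.monomial i a)
        = MvPowerSeries.C (σ := Fin s) (R := ℤ_[p]) a *
          ∏ j ∈ i.support, (ς (MvPolynomial.X j)) ^ (i j) := by
      conv_lhs => rw [MvPolynomial.monomial_eq]
      rw [map_mul, hCς, Finsupp.prod, map_prod]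
      congr 1
      exact Finset.prod_congr rfl fun j _ => map_pow ς _ _
    have hQ : MvPowerSeries.monomial (R := ℤ_[p]) (p • i) a
        = MvPowerSeries.C (σ := Fin s) (R := ℤ_[p]) a *
          ∏ j ∈ i.support, ((MvPowerSeries.X j : MvPowerSeries (Fin s) ℤ_[p]) ^ p) ^ (i j) := by
      rw [← aeval_c_monomial p i a, MvPolynomial.aeval_monomial, ← MvPowerSeries.c_eq_algebraMap,
        Finsupp.prod]
    rw [hP, hQ, ← mul_sub]
    refine ((gauss_mul_le r hr0' _ _).trans
      (mul_le_mul' (hCa a) (hprodDiff i.support i))).trans ?_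
    have hwt : (∑ j ∈ i.support, i j) = (i.sum fun _ n => n) := rfl
    rw [hwt, ENNReal.ofReal_mul (norm_nonneg a), ENNReal.ofReal_pow hcpos.le, ← hcc]
    exact le_of_eq (by ring)
  -- notation for the RHS norm
  set v : ENNReal := gaussNorm p s (r ^ (p : ℕ))
      (MvPolynomial.aeval (fun j => (MvPowerSeries.X j : MvPowerSeries (Fin s) ℤ_[p])) H)
    with hv
  -- decomposition of the difference
  have hdecD : ς H - MvPolynomial.aeval
      (fun j => (MvPowerSeries.X j : MvPowerSeries (Fin s) ℤ_[p]) ^ p) H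
      = ∑ i ∈ H.support, (ς (MvPolynomial.monomial i (MvPolynomial.coeff i H)) -
          MvPowerSeries.monomial (R := ℤ_[p]) (p • i) (MvPolynomial.coeff i H)) := by
    rw [aeval_c_eq p H]
    have hςH : ς H = ∑ i ∈ H.support,
        ς (MvPolynomial.monomial i (MvPolynomial.coeff i H)) := by
      conv_lhs => rw [H.as_sum]
      rw [map_sum]
    rw [hςH, ← Finset.sum_sub_distrib]
  have part1 : gaussNorm p s r
      (ς H - MvPolynomial.aeval
        (fun j => (MvPowerSeries.X j : MvPowerSeries (Fin s) ℤ_[p]) ^ p) H) ≤ dd * v := by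
    rw [hdecD]
    refine gauss_sum_le hr0' fun i _ => ?_
    refine (hmono i _).trans (mul_le_mul' le_rfl ?_)
    have := coeff_le_gauss (r ^ (p:ℕ))
      (MvPolynomial.aeval (fun j => (MvPowerSeries.X j : MvPowerSeries (Fin s) ℤ_[p])) H) i
    rwa [coeff_aeval_one H i] at this
  refine ⟨part1, ?_⟩
  -- second part
  by_cases hH : H = 0
  · subst hH
    rw [hv]
    simp only [map_zero, gauss_zero]
  · have hEv : gaussNorm p s r (MvPolynomial.aeval
        (fun j => (MvPowerSeries.X j : MvPowerSeries (Fin s) ℤ_[p]) ^ p) H) = v :=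
      gauss_aeval_pow hp0 H
    have hvtop : v ≠ ⊤ := by
      refine ne_top_of_le_ne_top (b := ENNReal.ofReal ((r ^ (p:ℕ)) ^ H.totalDegree))
        ENNReal.ofReal_ne_top ?_
      refine gauss_le fun i => ?_
      rw [coeff_aeval_one H i]
      by_cases h : i ∈ H.support
      · refine ENNReal.ofReal_le_ofReal ?_
        calc ‖MvPolynomial.coeff i H‖ * (r ^ (p:ℕ)) ^ (i.sum fun _ n => n)
            ≤ 1 * (r ^ (p:ℕ)) ^ H.totalDegree := by
              refine mul_le_mul (PadicInt.norm_le_one _)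
                (pow_le_pow_right₀ hc1 (MvPolynomial.le_totalDegree h))
                (pow_nonneg hcpos.le _) one_pos.le
          _ = (r ^ (p:ℕ)) ^ H.totalDegree := one_mul _
      · rw [MvPolynomial.notMem_support_iff.1 h]
        simp
    have hv0 : v ≠ 0 := by
      obtain ⟨i, hi⟩ := (MvPolynomial.support_nonempty).2 hH
      have ha : MvPolynomial.coeff i H ≠ 0 := MvPolynomial.mem_support_iff.1 hi
      have hlow : (0:ENNReal) < ENNReal.ofReal
          (‖MvPolynomial.coeff i H‖ * (r ^ (p:ℕ)) ^ (i.sum fun _ n => n)) :=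
        ENNReal.ofReal_pos.2 (mul_pos (norm_pos_iff.2 ha) (pow_pos hcpos _))
      have := coeff_le_gauss (r ^ (p:ℕ))
        (MvPolynomial.aeval (fun j => (MvPowerSeries.X j : MvPowerSeries (Fin s) ℤ_[p])) H) i
      rw [coeff_aeval_one H i] at this
      exact (lt_of_lt_of_le hlow this).ne'
    have hdd1 : dd < 1 := by
      rw [hdd]
      refine ENNReal.ofReal_lt_one.2 ?_
      refine Real.rpow_lt_one_of_one_lt_of_neg hr1 ?_
      simp [hpp.pos]
    have hlt : gaussNorm p s r
        (ς H - MvPolynomial.aeval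
          (fun j => (MvPowerSeries.X j : MvPowerSeries (Fin s) ℤ_[p]) ^ p) H)
        < gaussNorm p s r (MvPolynomial.aeval
          (fun j => (MvPowerSeries.X j : MvPowerSeries (Fin s) ℤ_[p]) ^ p) H) := by
      rw [hEv]
      refine lt_of_le_of_lt part1 ?_
      calc dd * v < 1 * v := by rw [mul_comm dd v, mul_comm 1 v]; exact ENNReal.mul_lt_mul_right hv0 hvtop hdd1
        _ = v := one_mul v
    exact (gauss_eq_of_lt hr0' hlt).trans hEv
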